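/- Let x : ℕ → ℂ be a sequence and a ∈ ℂ with |a| > 1, and suppose there exists M > 0 such that |x_n − a·x_{n−1}| ≤ M for every integer n ≥ 1. Then the sequence (x_n / a^n)_{n≥0} converges in ℂ; moreover, if the sequence (x_n) is unbounded, then the limit lim_{n→∞} x_n/a^n is nonzero. -/

import Mathlib

theorem stmt3 (x : ℕ → ℂ) (a : ℂ) (ha : 1 < ‖a‖)
    (M : ℝ) (hM : 0 < M)
    (hbd : ∀ n : ℕ, 1 ≤ n → ‖x n - a * x (n - 1)‖ ≤ M) :
    ∃ L : ℂ, Filter.Tendsto (fun n : ℕ => x n / a ^ n) Filter.atTop (nhds L) ∧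
      ((∀ B : ℝ, 0 < B → ∃ n : ℕ, B < ‖x n‖) → L ≠ 0) := by
  set A := ‖a‖ with hAdef
  have hA0 : 0 < A := lt_trans one_pos ha
  have haz : a ≠ 0 := by
    intro h
    have hz : A = 0 := by rw [hAdef, h]; simp
    linarith
  set r : ℝ := A⁻¹ with hrdef
  have hr0 : 0 < r := inv_pos.mpr hA0
  have hr1 : r < 1 := by
    rw [hrdef]
    rw [inv_lt_one_iff₀]
    right; exact ha
  set d : ℕ → ℂ := fun k => (x (k+1) - a * x k) / a ^ (k+1) with hd
  have hdb : ∀ k, ‖d k‖ ≤ M * r ^ (k+1) := by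
    intro k
    have h1 : ‖x (k+1) - a * x k‖ ≤ M := by
      have := hbd (k+1) (by omega)
      simpa using this
    have : ‖d k‖ = ‖x (k+1) - a * x k‖ / A ^ (k+1) := by
      rw [hd]; simp [map_div₀, map_pow, hAdef]
    rw [this]
    rw [div_le_iff₀ (by positivity)]
    calc ‖x (k+1) - a * x k‖ ≤ M := h1
      _ = M * r ^ (k+1) * A ^ (k+1) := by
          rw [hrdef, inv_pow, mul_assoc, inv_mul_cancel₀ (by positivity)]
          ring
  have hsumb : Summable (fun k : ℕ => M * r ^ (k+1)) := by
    have : Summable (fun k : ℕ => r ^ k) := summable_geometric_of_lt_one (le_of_lt hr0) hr1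
    simpa [pow_succ, mul_comm, mul_assoc, mul_left_comm] using (this.mul_left (M * r))
  have hsd : Summable d := by
    apply Summable.of_norm_bounded hsumb
    intro k
    simpa using hdb k
  have hy : ∀ n : ℕ, x n / a ^ n = x 0 + ∑ k ∈ Finset.range n, d k := by
    intro n
    induction n with
    | zero => simp
    | succ n ih =>
      rw [Finset.sum_range_succ, ← add_assoc, ← ih, hd]
      field_simp
      ring
  refine ⟨x 0 + ∑' k, d k, ?_, ?_⟩
  · have h1 : Filter.Tendsto (fun n => ∑ k ∈ Finset.range n, d k) Filter.atTop
        (nhds (∑' k, d k)) := hsd.hasSum.tendsto_sum_nat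
    have h2 := h1.const_add (x 0)
    apply h2.congr
    intro n
    exact (hy n).symm
  · intro hub hL0
    -- from L = 0, x n / a^n = - ∑' k, d (n + k)
    have key : ∀ n : ℕ, ‖x n‖ ≤ M * r / (1 - r) := by
      intro n
      have htail : x n / a ^ n = - ∑' k, d (k + n) := by
        have hs := Summable.sum_add_tsum_nat_add (f := d) n hsd
        have hzero : x 0 + ∑' k, d k = 0 := hL0
        rw [hy n]
        have : ∑ k ∈ Finset.range n, d k = (∑' k, d k) - ∑' k, d (k + n) := by
          rw [← hs]; ring
        rw [this]
        have hx0 : x 0 = - ∑' k, d k := by linear_combination hzero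
        rw [hx0]; ring
      have habs : ‖x n‖ = ‖x n / a ^ n‖ * A ^ n := by
        rw [norm_div, norm_pow, div_mul_cancel₀]
        positivity
      rw [habs, htail]
      have hsum2 : Summable (fun k : ℕ => M * r ^ (k + n + 1)) :=
        ((summable_geometric_of_lt_one (le_of_lt hr0) hr1).mul_left
          (M * r ^ (n+1))).congr (by intro k; ring)
      have hsdn : Summable (fun k => ‖d (k + n)‖) :=
        (hsd.comp_injective (add_left_injective n)).norm
      have hb1 : ‖-∑' k, d (k + n)‖ ≤ ∑' k : ℕ, M * r ^ (k + n + 1) := by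
        rw [norm_neg]
        refine (norm_tsum_le_tsum_norm (E := ℂ) hsdn).trans ?_
        apply Summable.tsum_le_tsum _ hsdn hsum2
        intro k; simpa using hdb (k + n)
      have hts : ∑' k : ℕ, M * r ^ (k + n + 1) = M * r ^ (n+1) / (1 - r) := by
        have : ∀ k : ℕ, M * r ^ (k + n + 1) = (M * r ^ (n+1)) * r ^ k := by
          intro k; ring
        rw [tsum_congr this, tsum_mul_left, tsum_geometric_of_lt_one (le_of_lt hr0) hr1]
        rw [div_eq_mul_inv]
      calc ‖-∑' k, d (k + n)‖ * A ^ n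
          ≤ (M * r ^ (n+1) / (1 - r)) * A ^ n := by
            apply mul_le_mul_of_nonneg_right _ (by positivity)
            rw [← hts]; exact hb1
        _ = M * (r ^ (n+1) * A ^ n) / (1 - r) := by ring
        _ = M * r / (1 - r) := by
            have hpow : r ^ (n+1) * A ^ n = r := by
              rw [pow_succ, mul_comm (r ^ n) r, mul_assoc, ← mul_pow, hrdef, inv_mul_cancel₀ hA0.ne', one_pow, mul_one]
            rw [hpow]
    have h1r : 0 < 1 - r := by linarith
    obtain ⟨n, hn⟩ := hub (M * r / (1 - r)) (by positivity)
    exact absurd (key n) (not_le.mpr hn)
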